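/- Let L ⊆ A be a bracket-closed subspace and let u, v ∈ L be homogeneous with uv ∈ L. If p_{uv}p_{vu} ≠ 1 or p_{uu}² ≠ 1, then for every m ∈ ℕ all the elements u^m v, u^{m−1}vu, …, vu^m (that is, u^k v u^{m−k} for 0 ≤ k ≤ m) belong to L. -/

import Mathlib

/-- An `F`-subspace `L` of a `G`-graded algebra `A` is *bracket-closed* (w.r.t. the
bicharacter `χ`) if it is spanned by its homogeneous elements and is closed under the
braided bracket `[u,v] = vu − p_{vu}·uv` of homogeneous elements, where
`p_{uv} = χ (deg u) (deg v)`. -/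
def IsBracketClosed {F A : Type*} (G : Type*) [Field F] [AddCommGroup G]
    [Ring A] [Algebra F A]
    (𝒜 : G → Submodule F A) (χ : G → G → Fˣ) (L : Submodule F A) : Prop :=
  L = Submodule.span F {a : A | a ∈ L ∧ ∃ g : G, a ∈ 𝒜 g} ∧
    ∀ (g h : G), ∀ u ∈ 𝒜 g, ∀ v ∈ 𝒜 h,
      u ∈ L → v ∈ L → v * u - (χ h g : F) • (u * v) ∈ L

/-- Cancel a nonzero scalar in a submodule membership. -/
lemma smul_mem_cancel_aux {F A : Type*} [Field F] [Ring A] [Algebra F A]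
    (L : Submodule F A) {c : F} (hc : c ≠ 0) {x : A} (hx : c • x ∈ L) : x ∈ L := by
  have := L.smul_mem c⁻¹ hx
  rwa [smul_smul, inv_mul_cancel₀ hc, one_smul] at this

lemma bichar_zero_left {F G : Type*} [Field F] [AddCommGroup G]
    (χ : G → G → Fˣ) (hχ1 : ∀ g h k : G, χ (g + h) k = χ g k * χ h k) (k : G) :
    χ 0 k = 1 := by
  have h := hχ1 0 0 k
  rw [add_zero] at h
  exact mul_eq_left.mp h.symm

lemma bichar_nsmul_left {F G : Type*} [Field F] [AddCommGroup G]
    (χ : G → G → Fˣ) (hχ1 : ∀ g h k : G, χ (g + h) k = χ g k * χ h k)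
    (n : ℕ) (g k : G) : χ (n • g) k = (χ g k) ^ n := by
  induction n with
  | zero => simpa using bichar_zero_left χ hχ1 k
  | succ n ih => rw [succ_nsmul, hχ1, ih, pow_succ]

lemma bichar_zero_right {F G : Type*} [Field F] [AddCommGroup G]
    (χ : G → G → Fˣ) (hχ2 : ∀ g h k : G, χ g (h + k) = χ g h * χ g k) (k : G) :
    χ k 0 = 1 := by
  have h := hχ2 k 0 0
  rw [add_zero] at h
  exact mul_eq_left.mp h.symm

lemma bichar_nsmul_right {F G : Type*} [Field F] [AddCommGroup G]
    (χ : G → G → Fˣ) (hχ2 : ∀ g h k : G, χ g (h + k) = χ g h * χ g k)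
    (n : ℕ) (g k : G) : χ k (n • g) = (χ k g) ^ n := by
  induction n with
  | zero => simpa using bichar_zero_right χ hχ2 k
  | succ n ih => rw [succ_nsmul, hχ2, ih, pow_succ]

theorem stmt_8 (F : Type*) [Field F] [CharZero F]
    (G : Type*) [AddCommGroup G] [DecidableEq G]
    (A : Type*) [Ring A] [Algebra F A]
    (𝒜 : G → Submodule F A) [GradedAlgebra 𝒜]
    (χ : G → G → Fˣ)
    (hχ1 : ∀ g h k : G, χ (g + h) k = χ g k * χ h k)
    (hχ2 : ∀ g h k : G, χ g (h + k) = χ g h * χ g k)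
    (L : Submodule F A) (hL : IsBracketClosed G 𝒜 χ L)
    (g h : G) (u v : A) (hu : u ∈ 𝒜 g) (hv : v ∈ 𝒜 h)
    (huL : u ∈ L) (hvL : v ∈ L)
    (huv : u * v ∈ L)
    (hcond : (χ g h : F) * (χ h g : F) ≠ 1 ∨ ((χ g g : F)) ^ 2 ≠ 1) :
    ∀ m : ℕ, 0 < m → ∀ k : ℕ, k ≤ m → u ^ k * v * u ^ (m - k) ∈ L := by
  obtain ⟨-, hbr⟩ := hL
  -- shorthand to cancel units
  have unit_ne : ∀ (w : Fˣ), w ≠ 1 → (1 : F) - (w : F) ≠ 0 := by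
    intro w hw hcontra
    apply hw
    have h1 : (w : F) = 1 := (sub_eq_zero.mp hcontra).symm
    exact Units.ext (by simpa using h1)
  -- degrees of the monomials
  have hw : ∀ (n k : ℕ), k ≤ n → u ^ k * v * u ^ (n - k) ∈ 𝒜 (n • g + h) := by
    intro n k hk
    have h1 : u ^ k * v * u ^ (n - k) ∈ 𝒜 (k • g + h + (n - k) • g) :=
      SetLike.mul_mem_graded (SetLike.mul_mem_graded (SetLike.pow_mem_graded k hu) hv)
        (SetLike.pow_mem_graded (n - k) hu)
    have hdeg : k • g + h + (n - k) • g = n • g + h := by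
      rw [add_right_comm, ← add_nsmul, Nat.add_sub_cancel' hk]
    rwa [hdeg] at h1
  -- product rewrites
  have eR : ∀ a b : ℕ, (u ^ a * v * u ^ b) * u = u ^ a * v * u ^ (b + 1) := by
    intro a b; rw [mul_assoc (u ^ a * v), ← pow_succ]
  have eL : ∀ a b : ℕ, u * (u ^ a * v * u ^ b) = u ^ (a + 1) * v * u ^ b := by
    intro a b; rw [← mul_assoc, ← mul_assoc, ← pow_succ']
  -- the statement for all m (including m = 0)
  set P : ℕ → Prop := fun n => ∀ k : ℕ, k ≤ n → u ^ k * v * u ^ (n - k) ∈ L with hP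
  have P0 : P 0 := by
    intro k hk
    interval_cases k
    simpa using hvL
  have P1 : P 1 := by
    intro k hk
    interval_cases k
    · -- v * u ∈ L
      have hb := hbr g h u hu v hv huL hvL
      have : v * u ∈ L := by
        have := L.add_mem hb (L.smul_mem ((χ h g : F)) huv)
        simpa using this
      simpa using this
    · simpa using huv
  have step : ∀ m : ℕ, P m → P (m + 1) → P (m + 2) := by
    intro m Pm PM
    set q : Fˣ := χ ((m + 1) • g + h) g with hqdef
    set r : Fˣ := χ g ((m + 1) • g + h) with hrdef
    -- chain relations
    have hA : ∀ k : ℕ, k ≤ m + 1 →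
        u ^ k * v * u ^ (m + 2 - k) - (q : F) • (u ^ (k + 1) * v * u ^ (m + 1 - k)) ∈ L := by
      intro k hk
      have hb := hbr g ((m + 1) • g + h) u hu _ (hw (m + 1) k hk) huL (PM k hk)
      rw [eR k (m + 1 - k), eL k (m + 1 - k)] at hb
      have : m + 1 - k + 1 = m + 2 - k := by omega
      rwa [this] at hb
    -- step up along the chain
    have hup : ∀ k : ℕ, k ≤ m + 1 → u ^ k * v * u ^ (m + 2 - k) ∈ L →
        u ^ (k + 1) * v * u ^ (m + 2 - (k + 1)) ∈ L := by
      intro k hk hxk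
      have hAk := hA k hk
      have hmem : (q : F) • (u ^ (k + 1) * v * u ^ (m + 1 - k)) ∈ L := by
        have := L.sub_mem hxk hAk
        simpa using this
      have : u ^ (k + 1) * v * u ^ (m + 1 - k) ∈ L :=
        smul_mem_cancel_aux L (q.ne_zero) hmem
      have heq : m + 2 - (k + 1) = m + 1 - k := by omega
      rwa [heq]
    -- x₀ = v * u^(m+2) ∈ L
    have hx0 : u ^ 0 * v * u ^ (m + 2) ∈ L := by
      by_cases hqr : q * r = 1
      · -- resonant case: use u² and level m
        set c : Fˣ := χ g g with hcdef
        have hq' : q = c ^ (m + 1) * χ h g := by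
          rw [hqdef, hχ1, bichar_nsmul_left χ hχ1]
        have hr' : r = c ^ (m + 1) * χ g h := by
          rw [hrdef, hχ2, bichar_nsmul_right χ hχ2]
        -- t = c * c ≠ 1
        have ht : c * c ≠ 1 := by
          intro htc
          have hP1 : χ g h * χ h g = 1 := by
            have h1 : (c * c) ^ (m + 1) * (χ g h * χ h g) = 1 := by
              rw [← hqr, hq', hr']
              exact Units.ext (by push_cast; ring)
            rw [htc, one_pow, one_mul] at h1
            exact h1
          rcases hcond with hc1 | hc2
          · apply hc1
            have : ((χ g h * χ h g : Fˣ) : F) = 1 := by rw [hP1]; simp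
            simpa using this
          · apply hc2
            have : ((c * c : Fˣ) : F) = 1 := by rw [htc]; simp
            rw [hcdef] at this
            simpa [sq] using this
        have hc_ne_one : c ≠ 1 := fun hc => ht (by rw [hc, one_mul])
        -- u * u ∈ L
        have hu2L : u * u ∈ L := by
          have hb := hbr g g u hu u hu huL huL
          have heq : ((1 : F) - (c : F)) • (u * u) = u * u - (c : F) • (u * u) := by
            rw [sub_smul, one_smul]
          rw [← heq] at hb
          exact smul_mem_cancel_aux L (unit_ne c hc_ne_one) hb
        have hu2g : u * u ∈ 𝒜 (g + g) := SetLike.mul_mem_graded hu hu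
        -- y = u^0 * v * u^m
        have hyL : u ^ 0 * v * u ^ m ∈ L := by
          have := Pm 0 (Nat.zero_le m)
          simpa using this
        have hy𝒜 : u ^ 0 * v * u ^ m ∈ 𝒜 (m • g + h) := by
          have := hw m 0 (Nat.zero_le m)
          simpa using this
        set s : Fˣ := χ (g + g) (m • g + h) with hsdef
        have hs' : s = (c ^ m * χ g h) * (c ^ m * χ g h) := by
          rw [hsdef, hχ1, hχ2, bichar_nsmul_right χ hχ2]
        have hC := hbr (m • g + h) (g + g) _ hy𝒜 (u * u) hu2g hyL hu2L
        -- rewrite the products in hC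
        have e1 : (u * u) * (u ^ 0 * v * u ^ m) = u ^ 2 * v * u ^ m := by
          rw [mul_assoc, eL 0 m, eL 1 m]
        have e2 : (u ^ 0 * v * u ^ m) * (u * u) = u ^ 0 * v * u ^ (m + 2) := by
          rw [← mul_assoc, eR 0 m, eR 0 (m + 1)]
        rw [e1, e2] at hC
        -- combine hA 0, hA 1, hC
        have hA0 := hA 0 (by omega)
        have hA1 := hA 1 (by omega)
        -- key scalar: 1 - q * q * s ≠ 0
        have hqs : q * q * s ≠ 1 := by
          intro hqs1
          apply ht
          have hkey : q * q * s * (c * c) = (q * r) ^ 2 := by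
            rw [hq', hr', hs']
            exact Units.ext (by push_cast; ring)
          rw [hqs1, one_mul, hqr, one_pow] at hkey
          exact hkey
        have hmem : (u ^ 0 * v * u ^ (m + 2) - (q : F) • (u ^ 1 * v * u ^ (m + 1)))
            + (q : F) • (u ^ 1 * v * u ^ (m + 1) - (q : F) • (u ^ 2 * v * u ^ m))
            + ((q : F) * (q : F)) • (u ^ 2 * v * u ^ m - (s : F) • (u ^ 0 * v * u ^ (m + 2)))
            ∈ L :=
          L.add_mem (L.add_mem hA0 (L.smul_mem _ hA1)) (L.smul_mem _ hC)
        have hval : ((1 : F) - (q : F) * (q : F) * (s : F)) • (u ^ 0 * v * u ^ (m + 2))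
            = (u ^ 0 * v * u ^ (m + 2) - (q : F) • (u ^ 1 * v * u ^ (m + 1)))
            + (q : F) • (u ^ 1 * v * u ^ (m + 1) - (q : F) • (u ^ 2 * v * u ^ m))
            + ((q : F) * (q : F)) • (u ^ 2 * v * u ^ m - (s : F) • (u ^ 0 * v * u ^ (m + 2))) := by
          module
        rw [← hval] at hmem
        have hne : (1 : F) - (q : F) * (q : F) * (s : F) ≠ 0 := by
          have := unit_ne (q * q * s) hqs
          simpa [mul_assoc] using this
        exact smul_mem_cancel_aux L hne hmem
      · -- nonresonant case: use hA 0 and the reverse bracket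
        have hy𝒜 : u ^ 0 * v * u ^ (m + 1) ∈ 𝒜 ((m + 1) • g + h) := by
          have := hw (m + 1) 0 (Nat.zero_le _)
          simpa using this
        have hyL : u ^ 0 * v * u ^ (m + 1) ∈ L := by
          have := PM 0 (Nat.zero_le _)
          simpa using this
        have hB := hbr ((m + 1) • g + h) g _ hy𝒜 u hu hyL huL
        rw [eL 0 (m + 1), eR 0 (m + 1)] at hB
        -- hB : u^1 * v * u^(m+1) - r • (u^0 * v * u^(m+2)) ∈ L
        have hA0 := hA 0 (by omega)
        have hmem : (u ^ 0 * v * u ^ (m + 2) - (q : F) • (u ^ 1 * v * u ^ (m + 1)))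
            + (q : F) • (u ^ 1 * v * u ^ (m + 1) - (r : F) • (u ^ 0 * v * u ^ (m + 2))) ∈ L :=
          L.add_mem hA0 (L.smul_mem _ hB)
        have hval : ((1 : F) - (q : F) * (r : F)) • (u ^ 0 * v * u ^ (m + 2))
            = (u ^ 0 * v * u ^ (m + 2) - (q : F) • (u ^ 1 * v * u ^ (m + 1)))
            + (q : F) • (u ^ 1 * v * u ^ (m + 1) - (r : F) • (u ^ 0 * v * u ^ (m + 2))) := by
          module
        rw [← hval] at hmem
        have hne : (1 : F) - (q : F) * (r : F) ≠ 0 := by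
          have := unit_ne (q * r) hqr
          simpa using this
        exact smul_mem_cancel_aux L hne hmem
    -- now climb the chain
    intro k hk
    induction k with
    | zero => simpa using hx0
    | succ n ih =>
      exact hup n (by omega) (ih (by omega))
  have Pall : ∀ n : ℕ, P n := by
    have hpair : ∀ n : ℕ, P n ∧ P (n + 1) := by
      intro n
      induction n with
      | zero => exact ⟨P0, P1⟩
      | succ n ih => exact ⟨ih.2, step n ih.1 ih.2⟩
    exact fun n => (hpair n).1
  intro m _ k hk
  exact Pall m k hk
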